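/- Let b1 > b2 be positive integers and T ≥ b1 + b2 with T − b2 = p'·b1 + q', 1 ≤ q' ≤ b1, and suppose (T − b1)/b2 ≥ ⌈(T − b2)/b1⌉. Then for every u ∈ [1, p'], u·b1 + q' + (p' − u + 1)·b2 ≤ T, and b1 + (p'+1)·b2 ≤ T. -/
import Mathlib


/-- Delay-sum verification for Theorem 5 (case `b2 < b1`): with
`T - b2 = p'*b1 + q'`, `1 ≤ q' ≤ b1`, and `(T-b1)/b2 ≥ ⌈(T-b2)/b1⌉`,
every coordinate's total delay is at most `T`. -/
theorem stmt14 (b1 b2 T p' q' : ℕ) (hb2 : 0 < b2) (hb : b2 < b1)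
    (hT : b1 + b2 ≤ T) (hpq : T - b2 = p' * b1 + q') (hq1 : 1 ≤ q') (hq2 : q' ≤ b1)
    (hcon : ((T : ℚ) - b1) / b2 ≥ (⌈((T : ℚ) - b2) / b1⌉ : ℤ)) :
    (∀ u, 1 ≤ u → u ≤ p' → u * b1 + q' + (p' - u + 1) * b2 ≤ T) ∧
      b1 + (p' + 1) * b2 ≤ T := by
  have hb2T : b2 ≤ T := le_trans (Nat.le_add_left _ _) hT
  have hTeq : T = p' * b1 + q' + b2 := by omega
  constructor
  · intro u hu1 hu2
    have : b2 * (p' - u) ≤ b1 * (p' - u) :=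
      Nat.mul_le_mul_right _ (le_of_lt hb)
    have hsub : u + (p' - u) = p' := by omega
    nlinarith [Nat.sub_add_cancel hu2]
  · -- need T - b1 ≥ (p'+1)*b2 via hcon
    have hQeq : ((T : ℚ) - b2) = p' * b1 + q' := by
      have h := congrArg (Nat.cast : ℕ → ℚ) hpq
      push_cast [Nat.cast_sub hb2T] at h
      linarith
    have hb1Q : (0 : ℚ) < b1 := by exact_mod_cast hb2.trans hb
    have hceil : (p' : ℤ) + 1 ≤ ⌈((T : ℚ) - b2) / b1⌉ := by
      have : (p' : ℚ) < ((T : ℚ) - b2) / b1 := by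
        rw [hQeq, lt_div_iff₀ hb1Q]
        have hq1' : (1 : ℚ) ≤ q' := by exact_mod_cast hq1
        nlinarith
      exact Int.lt_ceil.mpr (by exact_mod_cast this)
    have hcon' : ((p' : ℚ) + 1) ≤ ((T : ℚ) - b1) / b2 := by
      calc ((p' : ℚ) + 1) ≤ (⌈((T : ℚ) - b2) / b1⌉ : ℤ) := by exact_mod_cast hceil
        _ ≤ ((T : ℚ) - b1) / b2 := hcon
    have hb2Q : (0 : ℚ) < b2 := by exact_mod_cast hb2
    have hfin : ((p' : ℚ) + 1) * b2 + b1 ≤ T := by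
      rw [le_div_iff₀ hb2Q] at hcon'
      linarith
    have : ((b1 + (p' + 1) * b2 : ℕ) : ℚ) ≤ (T : ℚ) := by push_cast; linarith
    exact_mod_cast this
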